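/- Let g and each g_k be differentiable with g = Σ_k p_k g_k, and suppose the drift bound ‖b^s‖ ≤ ε√(M² + B²‖∇g(θ^s)‖²) holds with ε = 1/(2B), B ≥ 1. If g is L-smooth and the aggregated update is θ^{s+1} = θ^s - ηE(∇g(θ^s) + b^s) with η ≤ 1/(LE), then g(θ^{s+1}) ≤ g(θ^s) - (3ηE/8)‖∇g(θ^s)‖² + ηE M²/(8B²). -/

import Mathlib

open Real

local notation "⟪" x ", " y "⟫" => inner (𝕜 := ℝ) x y

lemma descent_lemma {V : Type*} [NormedAddCommGroup V] [InnerProductSpace ℝ V]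
    [CompleteSpace V]
    (g : V → ℝ) (gradg : V → V) (hgrad : ∀ x, HasGradientAt g (gradg x) x)
    (L : ℝ) (hL : 0 ≤ L)
    (hsmooth : ∀ x x', ‖gradg x - gradg x'‖ ≤ L * ‖x - x'‖)
    (x y : V) :
    g y ≤ g x + ⟪gradg x, y - x⟫ + L / 2 * ‖y - x‖ ^ 2 := by
  set d := y - x with hd
  set φ : ℝ → ℝ := fun t => g (x + t • d) - (t * ⟪gradg x, d⟫ + t ^ 2 * (L / 2 * ‖d‖ ^ 2))
    with hφ
  have hder : ∀ t : ℝ, HasDerivAt φ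
      (⟪gradg (x + t • d), d⟫ - (⟪gradg x, d⟫ + 2 * t * (L / 2 * ‖d‖ ^ 2))) t := by
    intro t
    have h1 : HasDerivAt (fun t : ℝ => x + t • d) d t := by
      simpa using ((hasDerivAt_id t).smul_const d).const_add x
    have h2 : HasDerivAt (fun t : ℝ => g (x + t • d)) ⟪gradg (x + t • d), d⟫ t := by
      have := ((hgrad (x + t • d)).hasFDerivAt).comp_hasDerivAt t h1
      simpa [Function.comp_def] using this
    have h3 : HasDerivAt (fun t : ℝ => t * ⟪gradg x, d⟫ + t ^ 2 * (L / 2 * ‖d‖ ^ 2))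
        (⟪gradg x, d⟫ + 2 * t * (L / 2 * ‖d‖ ^ 2)) t := by
      have ha : HasDerivAt (fun t : ℝ => t * ⟪gradg x, d⟫) ⟪gradg x, d⟫ t := by
        simpa using (hasDerivAt_id t).mul_const ⟪gradg x, d⟫
      have hb : HasDerivAt (fun t : ℝ => t ^ 2 * (L / 2 * ‖d‖ ^ 2))
          (2 * t * (L / 2 * ‖d‖ ^ 2)) t := by
        simpa using (hasDerivAt_pow 2 t).mul_const (L / 2 * ‖d‖ ^ 2)
      exact ha.add hb
    exact h2.sub h3
  have hanti : AntitoneOn φ (Set.Icc (0 : ℝ) 1) := by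
    apply antitoneOn_of_deriv_nonpos (convex_Icc 0 1)
    · exact fun t _ => ((hder t).differentiableAt).continuousAt.continuousWithinAt
    · exact fun t _ => ((hder t).differentiableAt).differentiableWithinAt
    · intro t ht
      rw [interior_Icc] at ht
      rw [(hder t).deriv]
      have hcs : ⟪gradg (x + t • d) - gradg x, d⟫ ≤ ‖gradg (x + t • d) - gradg x‖ * ‖d‖ :=
        real_inner_le_norm _ _
      have hlip : ‖gradg (x + t • d) - gradg x‖ ≤ L * (t * ‖d‖) := by
        have := hsmooth (x + t • d) x
        simpa [norm_smul, abs_of_nonneg ht.1.le, mul_assoc] using this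
      have hinner : ⟪gradg (x + t • d), d⟫ - ⟪gradg x, d⟫ ≤ L * t * ‖d‖ ^ 2 := by
        rw [← inner_sub_left]
        calc ⟪gradg (x + t • d) - gradg x, d⟫ ≤ ‖gradg (x + t • d) - gradg x‖ * ‖d‖ := hcs
          _ ≤ L * (t * ‖d‖) * ‖d‖ := by
              apply mul_le_mul_of_nonneg_right hlip (norm_nonneg d)
          _ = L * t * ‖d‖ ^ 2 := by ring
      nlinarith
  have h10 := hanti (Set.left_mem_Icc.2 zero_le_one) (Set.right_mem_Icc.2 zero_le_one) zero_le_one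
  have hxy : x + d = y := by rw [hd]; abel
  have e1 : φ 1 = g y - (⟪gradg x, d⟫ + L / 2 * ‖d‖ ^ 2) := by
    simp only [hφ, one_smul, one_mul, one_pow, hxy]
  have e0 : φ 0 = g x := by simp [hφ]
  rw [e1, e0] at h10
  linarith

theorem stmt18 {V : Type*} [NormedAddCommGroup V] [InnerProductSpace ℝ V]
    [CompleteSpace V]
    (g : V → ℝ) (gradg : V → V) (hgrad : ∀ x, HasGradientAt g (gradg x) x)
    (L η M B : ℝ) (E : ℕ) (hL : 0 < L) (hη : 0 < η) (hE : 1 ≤ E)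
    (hM : 0 ≤ M) (hB : 1 ≤ B)
    (hsmooth : ∀ x x', ‖gradg x - gradg x'‖ ≤ L * ‖x - x'‖)
    (hstep : η ≤ 1 / (L * E))
    (θ b : V)
    (hdrift : ‖b‖ ≤ 1 / (2 * B) * Real.sqrt (M ^ 2 + B ^ 2 * ‖gradg θ‖ ^ 2)) :
    g (θ - (η * E) • (gradg θ + b))
      ≤ g θ - 3 * η * E / 8 * ‖gradg θ‖ ^ 2 + η * E * M ^ 2 / (8 * B ^ 2) := by
  set s : ℝ := η * E with hs
  have hEpos : (1 : ℝ) ≤ (E : ℝ) := by exact_mod_cast hE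
  have hspos : 0 < s := by positivity
  have hLs : L * s ≤ 1 := by
    rw [hs]
    have hLE : 0 < L * (E : ℝ) := by positivity
    have := (le_div_iff₀ hLE).mp hstep
    nlinarith
  set n := gradg θ with hn
  have key := descent_lemma g gradg hgrad L hL.le hsmooth θ (θ - s • (n + b))
  have hy : θ - s • (n + b) - θ = -(s • (n + b)) := by abel
  rw [hy] at key
  have hinner : ⟪n, -(s • (n + b))⟫ = -(s * (‖n‖ ^ 2 + ⟪n, b⟫)) := by
    rw [inner_neg_right, inner_smul_right, inner_add_right, real_inner_self_eq_norm_sq]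
  have hnorm : ‖-(s • (n + b))‖ ^ 2 = s ^ 2 * ‖n + b‖ ^ 2 := by
    rw [norm_neg, norm_smul]
    rw [Real.norm_eq_abs, abs_of_nonneg hspos.le]
    ring
  rw [hinner, hnorm] at key
  have hexp : ‖n + b‖ ^ 2 = ‖n‖ ^ 2 + 2 * ⟪n, b⟫ + ‖b‖ ^ 2 := by
    rw [← real_inner_self_eq_norm_sq, inner_add_add_self, real_inner_self_eq_norm_sq,
      real_inner_self_eq_norm_sq, real_inner_comm b n]
    ring
  rw [hexp] at key
  -- bound on ‖b‖^2
  have hBpos : (0 : ℝ) < B := lt_of_lt_of_le one_pos hB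
  have harg : (0 : ℝ) ≤ M ^ 2 + B ^ 2 * ‖n‖ ^ 2 := by positivity
  have hb2 : ‖b‖ ^ 2 ≤ M ^ 2 / (4 * B ^ 2) + ‖n‖ ^ 2 / 4 := by
    have h1 : ‖b‖ ^ 2 ≤ (1 / (2 * B) * Real.sqrt (M ^ 2 + B ^ 2 * ‖n‖ ^ 2)) ^ 2 :=
      pow_le_pow_left₀ (norm_nonneg b) hdrift 2
    have h2 : (1 / (2 * B) * Real.sqrt (M ^ 2 + B ^ 2 * ‖n‖ ^ 2)) ^ 2
        = 1 / (4 * B ^ 2) * (M ^ 2 + B ^ 2 * ‖n‖ ^ 2) := by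
      rw [mul_pow, Real.sq_sqrt harg]
      ring
    rw [h2] at h1
    have hB2 : (0 : ℝ) < B ^ 2 := by positivity
    calc ‖b‖ ^ 2 ≤ 1 / (4 * B ^ 2) * (M ^ 2 + B ^ 2 * ‖n‖ ^ 2) := h1
      _ = M ^ 2 / (4 * B ^ 2) + ‖n‖ ^ 2 / 4 := by field_simp
  -- the quadratic term bound
  have hquad : L / 2 * (s ^ 2 * (‖n‖ ^ 2 + 2 * ⟪n, b⟫ + ‖b‖ ^ 2))
      ≤ s / 2 * (‖n‖ ^ 2 + 2 * ⟪n, b⟫ + ‖b‖ ^ 2) := by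
    have hpos : 0 ≤ ‖n‖ ^ 2 + 2 * ⟪n, b⟫ + ‖b‖ ^ 2 := by rw [← hexp]; positivity
    nlinarith [mul_le_mul_of_nonneg_right hLs (mul_nonneg hspos.le hpos)]
  have hgoal : g θ + -(s * (‖n‖ ^ 2 + ⟪n, b⟫)) + s / 2 * (‖n‖ ^ 2 + 2 * ⟪n, b⟫ + ‖b‖ ^ 2)
      ≤ g θ - 3 * s / 8 * ‖n‖ ^ 2 + s * M ^ 2 / (8 * B ^ 2) := by
    have : s * M ^ 2 / (8 * B ^ 2) = s / 2 * (M ^ 2 / (4 * B ^ 2)) := by ring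
    rw [this]
    nlinarith [hspos.le]
  calc g (θ - s • (n + b)) ≤ g θ + -(s * (‖n‖ ^ 2 + ⟪n, b⟫))
        + L / 2 * (s ^ 2 * (‖n‖ ^ 2 + 2 * ⟪n, b⟫ + ‖b‖ ^ 2)) := key
    _ ≤ g θ + -(s * (‖n‖ ^ 2 + ⟪n, b⟫)) + s / 2 * (‖n‖ ^ 2 + 2 * ⟪n, b⟫ + ‖b‖ ^ 2) := by
        linarith
    _ ≤ g θ - 3 * s / 8 * ‖n‖ ^ 2 + s * M ^ 2 / (8 * B ^ 2) := hgoal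
    _ = g θ - 3 * η * E / 8 * ‖n‖ ^ 2 + η * E * M ^ 2 / (8 * B ^ 2) := by rw [hs]; ring
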